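/- Let Q > 0, λ > 0, and let ξ be a symmetric random variable with |ξ| ≤ 1 almost surely. Define the random capacity Q̂ = Q(1 + λξ). If a real number x satisfies x ≤ Q - θ where θ = Qλ√(-2 log q) for some q ∈ (0,1], then P(x > Q̂) ≤ q. -/

import Mathlib

open MeasureTheory Real

theorem stmt_5 {Ω : Type*} [MeasurableSpace Ω] (μ : Measure Ω) [IsProbabilityMeasure μ]
    (ξ : Ω → ℝ) (hmeas : Measurable ξ)
    (hsym : Measure.map ξ μ = Measure.map (fun ω => -ξ ω) μ)
    (hbdd : ∀ᵐ ω ∂μ, |ξ ω| ≤ 1)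
    (Q lam q x : ℝ) (hQ : 0 < Q) (hlam : 0 < lam) (hq : q ∈ Set.Ioc (0:ℝ) 1)
    (hx : x ≤ Q - Real.sqrt (-2 * Real.log q) * Q * lam) :
    (μ {ω | Q * (1 + lam * ξ ω) < x}).toReal ≤ q := by
  obtain ⟨hq0, hq1⟩ := hq
  set t := Real.sqrt (-2 * Real.log q) with ht
  have ht0 : 0 ≤ t := Real.sqrt_nonneg _
  have hsub : {ω | Q * (1 + lam * ξ ω) < x} ⊆ {ω | ξ ω < -t} := by
    intro ω hω
    simp only [Set.mem_setOf_eq] at hω ⊢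
    nlinarith [mul_pos hQ hlam]
  by_cases hcase : 1 ≤ t
  · -- event is a.s. empty
    have hnull : μ {ω | ξ ω < -t} = 0 := by
      have : {ω | ξ ω < -t} ⊆ {ω | ¬ |ξ ω| ≤ 1} := by
        intro ω hω
        simp only [Set.mem_setOf_eq, not_le] at hω ⊢
        have : ξ ω < -1 := lt_of_lt_of_le hω (by linarith)
        calc (1:ℝ) < -(ξ ω) := by linarith
          _ ≤ |ξ ω| := neg_le_abs _
      exact measure_mono_null this (ae_iff.mp hbdd)
    have : μ {ω | Q * (1 + lam * ξ ω) < x} = 0 :=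
      measure_mono_null hsub hnull
    rw [this]; simpa using le_of_lt hq0
  · push_neg at hcase
    -- then -2 log q < 1, so q > e^{-1/2} ≥ 1/2
    have hlogq : Real.log q ≤ 0 := Real.log_nonpos (le_of_lt hq0) hq1
    have hsq : t ^ 2 = -2 * Real.log q := Real.sq_sqrt (by linarith)
    have hlt : -2 * Real.log q < 1 := by nlinarith
    have hqhalf : (1:ℝ)/2 ≤ q := by
      have h1 : Real.exp (-(1/2 : ℝ)) ≥ 1/2 := by
        have := Real.add_one_le_exp (-(1/2 : ℝ)); linarith
      have h2 : Real.exp (Real.log q) = q := Real.exp_log hq0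
      have h3 : Real.exp (-(1/2 : ℝ)) ≤ Real.exp (Real.log q) :=
        Real.exp_le_exp.mpr (by linarith)
      linarith
    -- symmetry: μ {ξ < -t} = μ {t < ξ}
    have hA : MeasurableSet {ω | ξ ω < -t} := hmeas measurableSet_Iio
    have hB : MeasurableSet {ω | t < ξ ω} := hmeas measurableSet_Ioi
    have hAB : μ {ω | ξ ω < -t} = μ {ω | t < ξ ω} := by
      have e1 : μ {ω | ξ ω < -t} = (Measure.map ξ μ) (Set.Iio (-t)) := by
        rw [Measure.map_apply hmeas measurableSet_Iio]; rfl
      have e2 : (Measure.map (fun ω => -ξ ω) μ) (Set.Iio (-t)) = μ {ω | t < ξ ω} := by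
        rw [Measure.map_apply (f := fun ω => -ξ ω) hmeas.neg measurableSet_Iio]
        congr 1
        ext ω
        simp [Set.mem_Iio, neg_lt_neg_iff, lt_neg]
      rw [e1, hsym, e2]
    have hdisj : Disjoint {ω | ξ ω < -t} {ω | t < ξ ω} := by
      rw [Set.disjoint_left]
      intro ω h1 h2
      simp only [Set.mem_setOf_eq] at h1 h2
      linarith
    have hsum : μ {ω | ξ ω < -t} + μ {ω | t < ξ ω} ≤ 1 := by
      rw [← measure_union hdisj hB]
      exact prob_le_one
    rw [← hAB] at hsum
    have hfin : μ {ω | ξ ω < -t} ≠ ⊤ := measure_ne_top μ _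
    have hhalf : (μ {ω | ξ ω < -t}).toReal ≤ 1/2 := by
      have := ENNReal.toReal_mono (by norm_num) hsum
      rw [ENNReal.toReal_add hfin hfin] at this
      simp at this
      linarith
    have hmono : (μ {ω | Q * (1 + lam * ξ ω) < x}).toReal ≤ (μ {ω | ξ ω < -t}).toReal :=
      ENNReal.toReal_mono hfin (measure_mono hsub)
    linarith
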